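/- Let Γ be a finite simple graph with Godsil–McKay partition π = {C₁, …, C_t, D} and switching matrix Q, let Δ be a finite simple graph, and let ⋆ be the unified product of any fixed type. Let Π = {C_i × {w} : i ∈ [t], w ∈ V(Δ)} ∪ {D × V(Δ)} be the induced Godsil–McKay partition of Γ ⋆ Δ. Then the switching matrix of Π equals Q ⊗ I, and (Q ⊗ I) A(Γ ⋆ Δ) (Q ⊗ I) = A((sw_π Γ) ⋆ Δ); in particular, the graph (sw_π Γ) ⋆ Δ is isomorphic to sw_Π (Γ ⋆ Δ). -/

import Mathlib

open Classical Matrix Kronecker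

/-- The number of neighbors of `x` inside the set `c`. -/
noncomputable def nbrCount {V : Type*} (G : SimpleGraph V) (x : V) (c : Finset V) : ℕ :=
  (c.filter fun y => G.Adj x y).card

/-- `{C i} ∪ {D}` is a partition of the vertex set (all cells nonempty, pairwise
disjoint, covering). -/
def IsPartitionWithCell {V ι : Type*} (C : ι → Finset V) (D : Finset V) : Prop :=
  (∀ i, (C i).Nonempty) ∧ D.Nonempty ∧
    Pairwise (fun i j => Disjoint (C i) (C j)) ∧
    (∀ i, Disjoint (C i) D) ∧ ∀ x : V, x ∈ D ∨ ∃ i, x ∈ C i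

/-- The family of cells `C` is equitable for `G` : any two vertices of a cell `C i`
have the same number of neighbors in each cell `C j`. -/
def IsEquitableOn {V ι : Type*} (G : SimpleGraph V) (C : ι → Finset V) : Prop :=
  ∀ i j, ∀ x ∈ C i, ∀ y ∈ C i, nbrCount G x (C j) = nbrCount G y (C j)

/-- Every vertex of `D` has `0`, `|C i|/2` or `|C i|` neighbors in each cell `C i`. -/
def GMhalf {V ι : Type*} (G : SimpleGraph V) (C : ι → Finset V) (D : Finset V) : Prop :=
  ∀ x ∈ D, ∀ i, nbrCount G x (C i) = 0 ∨ 2 * nbrCount G x (C i) = (C i).card ∨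
    nbrCount G x (C i) = (C i).card

/-- `π = {C₁, …, C_t, D}` is a Godsil–McKay partition of `G` with Godsil–McKay cell `D`. -/
def IsGMPartition {V ι : Type*} (G : SimpleGraph V) (C : ι → Finset V) (D : Finset V) : Prop :=
  IsPartitionWithCell C D ∧ IsEquitableOn G C ∧ GMhalf G C D

/-- The graph obtained from `G` by Godsil–McKay switching with respect to the
partition `{C₁, …, C_t, D}` : adjacency and nonadjacency between `x ∈ D` and the
vertices of `C i` are interchanged whenever `x` has exactly `|C i|/2` neighbors in `C i`. -/
def GMswitch {V ι : Type*} (G : SimpleGraph V) (C : ι → Finset V) (D : Finset V) :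
    SimpleGraph V where
  Adj x y := x ≠ y ∧ Xor' (G.Adj x y)
    (∃ i, (x ∈ D ∧ y ∈ C i ∧ 2 * nbrCount G x (C i) = (C i).card) ∨
          (y ∈ D ∧ x ∈ C i ∧ 2 * nbrCount G y (C i) = (C i).card))
  symm := by
    constructor
    rintro x y ⟨hne, h⟩
    refine ⟨hne.symm, ?_⟩
    have h1 : (G.Adj y x) = (G.Adj x y) := propext (G.adj_comm y x)
    have h2 : (∃ i, (y ∈ D ∧ x ∈ C i ∧ 2 * nbrCount G y (C i) = (C i).card) ∨
          (x ∈ D ∧ y ∈ C i ∧ 2 * nbrCount G x (C i) = (C i).card)) =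
        (∃ i, (x ∈ D ∧ y ∈ C i ∧ 2 * nbrCount G x (C i) = (C i).card) ∨
          (y ∈ D ∧ x ∈ C i ∧ 2 * nbrCount G y (C i) = (C i).card)) :=
      propext (exists_congr fun i => or_comm)
    rw [h1, h2]
    exact h
  loopless := by constructor; rintro x ⟨hne, -⟩; exact hne rfl

/-- The adjacency matrix of a graph, with rational entries. -/
noncomputable def adjM {V : Type*} (G : SimpleGraph V) : Matrix V V ℚ :=
  Matrix.of fun x y => if G.Adj x y then 1 else 0

/-- The all-one matrix. -/
def allOnes (V : Type*) : Matrix V V ℚ := Matrix.of fun _ _ => 1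

/-- The switching matrix `Q` of the partition `{C₁, …, C_t, D}` :
`Q x y = 2/|C i| - δ_{x y}` if `x, y ∈ C i`, `Q x y = δ_{x y}` if `x, y ∈ D`,
and `Q x y = 0` otherwise. -/
noncomputable def switchMatrix {V ι : Type*} (C : ι → Finset V) (D : Finset V) :
    Matrix V V ℚ :=
  Matrix.of fun x y =>
    if h : ∃ i, x ∈ C i ∧ y ∈ C i then
      2 / ((C h.choose).card : ℚ) - (if x = y then 1 else 0)
    else if x ∈ D ∧ y ∈ D then (if x = y then 1 else 0) else 0

/-- The characteristic matrix of a family of cells: `S x i = 1` iff `x ∈ C i`. -/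
noncomputable def charMat {V ι : Type*} (C : ι → Finset V) : Matrix V ι ℚ :=
  Matrix.of fun x i => if x ∈ C i then 1 else 0

/-- `A₀ = I`, `A₁ = A(G)`, `A₂ = J - I - A(G)`. -/
noncomputable def stdMats {V : Type*} [DecidableEq V] (G : SimpleGraph V) :
    Fin 3 → Matrix V V ℚ :=
  ![1, adjM G, allOnes V - 1 - adjM G]

/-- The three basic relations: `i = 0` : equality, `i = 1` : adjacency,
`i = 2` : distinct nonadjacency. -/
def relOfIdx {V : Type*} (G : SimpleGraph V) (i : Fin 3) (x y : V) : Prop :=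
  (i = 0 ∧ x = y) ∨ (i = 1 ∧ G.Adj x y) ∨ (i = 2 ∧ x ≠ y ∧ ¬ G.Adj x y)

lemma relOfIdx_symm {V : Type*} {G : SimpleGraph V} {i : Fin 3} {x y : V}
    (h : relOfIdx G i x y) : relOfIdx G i y x := by
  rcases h with ⟨hi, h⟩ | ⟨hi, h⟩ | ⟨hi, h1, h2⟩
  · exact Or.inl ⟨hi, h.symm⟩
  · exact Or.inr (Or.inl ⟨hi, h.symm⟩)
  · exact Or.inr (Or.inr ⟨hi, h1.symm, fun hadj => h2 hadj.symm⟩)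

/-- The unified graph product of type `[0 s₀₁ s₀₂; s₁₀ s₁₁ s₁₂; s₂₀ s₂₁ s₂₂]` :
the graph on `V × W` whose adjacency matrix is `Σ_{i,j} s i j • (A_i ⊗ B_j)`. -/
def unifiedProd {V W : Type*} (G : SimpleGraph V) (H : SimpleGraph W)
    (s : Fin 3 → Fin 3 → ℚ) : SimpleGraph (V × W) where
  Adj p q := p ≠ q ∧ ∃ i j, s i j = 1 ∧ relOfIdx G i p.1 q.1 ∧ relOfIdx H j p.2 q.2
  symm := by
    constructor
    rintro p q ⟨hne, i, j, hs, hi, hj⟩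
    exact ⟨hne.symm, i, j, hs, relOfIdx_symm hi, relOfIdx_symm hj⟩
  loopless := by constructor; rintro p ⟨hne, -⟩; exact hne rfl

set_option linter.unusedSectionVars false

noncomputable def relIdx {V : Type*} (G : SimpleGraph V) (x y : V) : Fin 3 :=
  if x = y then 0 else if G.Adj x y then 1 else 2

lemma relOfIdx_iff {V : Type*} {G : SimpleGraph V} {i : Fin 3} {x y : V} :
    relOfIdx G i x y ↔ i = relIdx G x y := by
  unfold relOfIdx relIdx
  by_cases h : x = y
  · subst h; simp [G.irrefl]
  · by_cases ha : G.Adj x y <;> simp [h, ha]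

lemma relIdx_comm {V : Type*} (G : SimpleGraph V) (x y : V) :
    relIdx G x y = relIdx G y x := by
  unfold relIdx
  by_cases h : x = y
  · simp [h]
  · simp [h, Ne.symm h, G.adj_comm x y]


section Switch
variable {V ι : Type*} [Fintype V] [DecidableEq V] {C : ι → Finset V} {D : Finset V}

lemma cell_eq (hdis : Pairwise fun i j => Disjoint (C i) (C j)) {i j : ι} {x : V}
    (hi : x ∈ C i) (hj : x ∈ C j) : i = j := by
  by_contra h
  exact (Finset.disjoint_left.mp (hdis h) hi) hj

lemma Q_CC (hdis : Pairwise fun i j => Disjoint (C i) (C j)) {i : ι} {x y : V}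
    (hx : x ∈ C i) (hy : y ∈ C i) :
    switchMatrix C D x y = 2 / ((C i).card : ℚ) - (if x = y then 1 else 0) := by
  have h : ∃ j, x ∈ C j ∧ y ∈ C j := ⟨i, hx, hy⟩
  have hch : h.choose = i := cell_eq hdis h.choose_spec.1 hx
  simp only [switchMatrix, Matrix.of_apply, dif_pos h, hch]
  split_ifs <;> rfl

lemma Q_not {x y : V} (h : ¬ ∃ i, x ∈ C i ∧ y ∈ C i) :
    switchMatrix C D x y
      = if x ∈ D ∧ y ∈ D then (if x = y then 1 else 0) else 0 := by
  simp only [switchMatrix, Matrix.of_apply, dif_neg h]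
  split_ifs <;> rfl

lemma not_mem_cell (hP : IsPartitionWithCell C D) {x : V} (hx : x ∈ D) (i : ι) :
    x ∉ C i := fun h => Finset.disjoint_left.mp (hP.2.2.2.1 i) h hx

lemma not_mem_D (hP : IsPartitionWithCell C D) {x : V} {i : ι} (hx : x ∈ C i) :
    x ∉ D := Finset.disjoint_left.mp (hP.2.2.2.1 i) hx

lemma Q_row_D (hP : IsPartitionWithCell C D) {x : V} (hx : x ∈ D) (f : V → ℚ) :
    ∑ z, switchMatrix C D x z * f z = f x := by
  rw [Finset.sum_eq_single x]
  · have h1 : ¬ ∃ i, x ∈ C i ∧ x ∈ C i := fun ⟨i, hi, _⟩ => not_mem_cell hP hx i hi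
    rw [Q_not h1]; simp [hx]
  · intro z _ hzx
    have h1 : ¬ ∃ i, x ∈ C i ∧ z ∈ C i := fun ⟨i, hi, _⟩ => not_mem_cell hP hx i hi
    rw [Q_not h1]
    by_cases hz : z ∈ D
    · simp [hx, hz, Ne.symm hzx]
    · simp [hz]
  · intro h; exact absurd (Finset.mem_univ x) h

lemma Q_row_C (hP : IsPartitionWithCell C D) {i : ι} {x : V} (hx : x ∈ C i) (f : V → ℚ) :
    ∑ z, switchMatrix C D x z * f z
      = 2 / ((C i).card : ℚ) * (∑ z ∈ C i, f z) - f x := by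
  have hxD : x ∉ D := not_mem_D hP hx
  have hzero : ∀ z ∈ Finset.univ, z ∉ C i → switchMatrix C D x z * f z = 0 := by
    intro z _ hz
    have h1 : ¬ ∃ j, x ∈ C j ∧ z ∈ C j := by
      rintro ⟨j, hxj, hzj⟩
      exact hz ((cell_eq hP.2.2.1 hxj hx) ▸ hzj)
    rw [Q_not h1, if_neg (fun hc => hxD hc.1), zero_mul]
  rw [← Finset.sum_subset (Finset.subset_univ (C i)) hzero]
  have : ∀ z ∈ C i, switchMatrix C D x z * f z
      = 2 / ((C i).card : ℚ) * f z - (if x = z then f z else 0) := by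
    intro z hz
    rw [Q_CC hP.2.2.1 hx hz]
    by_cases h : x = z <;> simp [h] <;> ring
  rw [Finset.sum_congr rfl this, Finset.sum_sub_distrib, Finset.sum_ite_eq, if_pos hx,
    Finset.mul_sum]

lemma Q_symm (hP : IsPartitionWithCell C D) (x y : V) :
    switchMatrix C D x y = switchMatrix C D y x := by
  by_cases h : ∃ i, x ∈ C i ∧ y ∈ C i
  · obtain ⟨i, hx, hy⟩ := h
    rw [Q_CC hP.2.2.1 hx hy, Q_CC hP.2.2.1 hy hx]
    by_cases hxy : x = y
    · simp [hxy]
    · simp [hxy, Ne.symm hxy]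
  · have h' : ¬ ∃ i, y ∈ C i ∧ x ∈ C i := fun ⟨i, h1, h2⟩ => h ⟨i, h2, h1⟩
    rw [Q_not h, Q_not h']
    by_cases hxy : x ∈ D ∧ y ∈ D
    · by_cases hxy2 : x = y
      · simp [hxy2]
      · simp [hxy, hxy.1, hxy.2, hxy2, Ne.symm hxy2]
    · have h2 : ¬ (y ∈ D ∧ x ∈ D) := fun hc => hxy ⟨hc.2, hc.1⟩
      simp [hxy, h2]

lemma Q_col_D (hP : IsPartitionWithCell C D) {y : V} (hy : y ∈ D) (f : V → ℚ) :
    ∑ z, f z * switchMatrix C D z y = f y := by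
  rw [Finset.sum_congr rfl fun z _ => by rw [Q_symm hP z y, mul_comm]]
  exact Q_row_D hP hy f

lemma Q_col_C (hP : IsPartitionWithCell C D) {i : ι} {y : V} (hy : y ∈ C i) (f : V → ℚ) :
    ∑ z, f z * switchMatrix C D z y
      = 2 / ((C i).card : ℚ) * (∑ z ∈ C i, f z) - f y := by
  rw [Finset.sum_congr rfl fun z _ => by rw [Q_symm hP z y, mul_comm]]
  exact Q_row_C hP hy f

end Switch

section AdjM
variable {V : Type*} [Fintype V] [DecidableEq V] {G : SimpleGraph V}

lemma adjM_symm (G : SimpleGraph V) (x y : V) : adjM G x y = adjM G y x := by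
  simp only [adjM, Matrix.of_apply, G.adj_comm x y]

lemma nbrCount_cast (G : SimpleGraph V) (x : V) (c : Finset V) :
    ((nbrCount G x c : ℚ)) = ∑ z ∈ c, adjM G x z := by
  simp only [adjM, Matrix.of_apply, Finset.sum_boole, nbrCount]

lemma nbrCount_cast' (G : SimpleGraph V) (x : V) (c : Finset V) :
    ((nbrCount G x c : ℚ)) = ∑ z ∈ c, adjM G z x := by
  rw [nbrCount_cast]
  exact Finset.sum_congr rfl fun z _ => adjM_symm G x z

lemma adjM_eq_zero_iff {x y : V} : adjM G x y = 0 ↔ ¬ G.Adj x y := by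
  simp only [adjM, Matrix.of_apply]
  split_ifs with h <;> simp [h]

lemma adjM_eq_one_iff {x y : V} : adjM G x y = 1 ↔ G.Adj x y := by
  simp only [adjM, Matrix.of_apply]
  split_ifs with h <;> simp [h]

end AdjM

section QLemmas
variable {V ι : Type*} [Fintype V] [DecidableEq V] {C : ι → Finset V} {D : Finset V}

lemma cell_card_ne (hP : IsPartitionWithCell C D) (i : ι) : ((C i).card : ℚ) ≠ 0 :=
  Nat.cast_ne_zero.mpr (Finset.card_ne_zero.mpr (hP.1 i))

lemma QQ (hP : IsPartitionWithCell C D) :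
    switchMatrix C D * switchMatrix C D = 1 := by
  ext x y
  rw [Matrix.mul_apply, Matrix.one_apply]
  rcases hP.2.2.2.2 x with hx | ⟨i, hx⟩
  · rw [Q_row_D hP hx]
    rcases hP.2.2.2.2 y with hy | ⟨j, hy⟩
    · have h1 : ¬ ∃ k, x ∈ C k ∧ y ∈ C k := fun ⟨k, hk, _⟩ => not_mem_cell hP hx k hk
      rw [Q_not h1, if_pos ⟨hx, hy⟩]
    · have h1 : ¬ ∃ k, x ∈ C k ∧ y ∈ C k := fun ⟨k, hk, _⟩ => not_mem_cell hP hx k hk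
      have hne : x ≠ y := fun h => not_mem_cell hP hx j (h ▸ hy)
      rw [Q_not h1, if_neg (fun hc => not_mem_D hP hy hc.2), if_neg hne]
  · rw [Q_row_C hP hx]
    by_cases hy : y ∈ C i
    · have hsum : ∑ z ∈ C i, switchMatrix C D z y = 1 := by
        have : ∀ z ∈ C i, switchMatrix C D z y
            = 2 / ((C i).card : ℚ) - (if y = z then 1 else 0) := by
          intro z hz
          rw [Q_CC hP.2.2.1 hz hy]
          congr 1
          by_cases h : z = y
          · simp [h]
          · simp [h, Ne.symm h]
        rw [Finset.sum_congr rfl this, Finset.sum_sub_distrib, Finset.sum_ite_eq,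
          if_pos hy, Finset.sum_const, nsmul_eq_mul]
        field_simp [cell_card_ne hP i]
        norm_num
      rw [hsum, Q_CC hP.2.2.1 hx hy]
      ring
    · have hsum : ∑ z ∈ C i, switchMatrix C D z y = 0 := by
        apply Finset.sum_eq_zero
        intro z hz
        have h1 : ¬ ∃ k, z ∈ C k ∧ y ∈ C k := by
          rintro ⟨k, hzk, hyk⟩
          exact hy ((cell_eq hP.2.2.1 hzk hz) ▸ hyk)
        rw [Q_not h1, if_neg (fun hc => not_mem_D hP hz hc.1)]
      have h1 : ¬ ∃ k, x ∈ C k ∧ y ∈ C k := by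
        rintro ⟨k, hxk, hyk⟩
        exact hy ((cell_eq hP.2.2.1 hxk hx) ▸ hyk)
      have hne : x ≠ y := fun h => hy (h ▸ hx)
      rw [hsum, Q_not h1, if_neg (fun hc => not_mem_D hP hx hc.1), if_neg hne]
      ring

lemma QJ (hP : IsPartitionWithCell C D) :
    switchMatrix C D * allOnes V = allOnes V := by
  ext x y
  rw [Matrix.mul_apply]
  have hall : ∀ z, allOnes V z y = 1 := fun z => rfl
  rcases hP.2.2.2.2 x with hx | ⟨i, hx⟩
  · rw [Q_row_D hP hx]
  · rw [Q_row_C hP hx]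
    simp only [hall, allOnes, Matrix.of_apply, Finset.sum_const, nsmul_eq_mul, mul_one]
    field_simp [cell_card_ne hP i]
    norm_num

lemma JQ (hP : IsPartitionWithCell C D) :
    allOnes V * switchMatrix C D = allOnes V := by
  ext x y
  rw [Matrix.mul_apply]
  have hall : ∀ z, allOnes V x z = 1 := fun z => rfl
  rcases hP.2.2.2.2 y with hy | ⟨i, hy⟩
  · rw [Q_col_D hP hy (fun z => allOnes V x z)]
  · rw [Q_col_C hP hy (fun z => allOnes V x z)]
    simp only [hall, allOnes, Matrix.of_apply, Finset.sum_const, nsmul_eq_mul, mul_one]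
    field_simp [cell_card_ne hP i]
    norm_num

end QLemmas

section GMswitchLemmas
variable {V ι : Type*} [Fintype V] [DecidableEq V] {G : SimpleGraph V}
  {C : ι → Finset V} {D : Finset V}

def Flips (G : SimpleGraph V) (C : ι → Finset V) (D : Finset V) (x y : V) : Prop :=
  ∃ i, (x ∈ D ∧ y ∈ C i ∧ 2 * nbrCount G x (C i) = (C i).card) ∨
       (y ∈ D ∧ x ∈ C i ∧ 2 * nbrCount G y (C i) = (C i).card)

lemma GMswitch_adj {x y : V} :
    (GMswitch G C D).Adj x y ↔ x ≠ y ∧ Xor' (G.Adj x y) (Flips G C D x y) := Iff.rfl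

lemma adjM_GMswitch_not {x y : V} (h : ¬ Flips G C D x y) :
    adjM (GMswitch G C D) x y = adjM G x y := by
  have hiff : (GMswitch G C D).Adj x y ↔ G.Adj x y := by
    rw [GMswitch_adj]
    constructor
    · rintro ⟨-, h'⟩
      rcases h' with ⟨ha, -⟩ | ⟨hf, -⟩
      · exact ha
      · exact absurd hf h
    · intro ha
      exact ⟨G.ne_of_adj ha, Or.inl ⟨ha, h⟩⟩
  simp only [adjM, Matrix.of_apply, hiff]

lemma not_flips_DD (hP : IsPartitionWithCell C D) {x y : V} (hx : x ∈ D) (hy : y ∈ D) :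
    ¬ Flips G C D x y :=
  fun ⟨i, h⟩ => h.elim (fun h => not_mem_cell hP hy i h.2.1)
    (fun h => not_mem_cell hP hx i h.2.1)

lemma not_flips_CC (hP : IsPartitionWithCell C D) {x y : V} {i j : ι}
    (hx : x ∈ C i) (hy : y ∈ C j) : ¬ Flips G C D x y :=
  fun ⟨k, h⟩ => h.elim (fun h => not_mem_D hP hx h.1) (fun h => not_mem_D hP hy h.1)

lemma flips_DC (hP : IsPartitionWithCell C D) {x y : V} (hx : x ∈ D) {j : ι}
    (hy : y ∈ C j) :
    Flips G C D x y ↔ 2 * nbrCount G x (C j) = (C j).card := by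
  constructor
  · rintro ⟨i, ⟨-, hyi, hh⟩ | ⟨hyD, -, -⟩⟩
    · rwa [cell_eq hP.2.2.1 hyi hy] at hh
    · exact absurd hyD (not_mem_D hP hy)
  · intro hh; exact ⟨j, Or.inl ⟨hx, hy, hh⟩⟩

lemma adjM_GMswitch_flip (hP : IsPartitionWithCell C D) {x y : V} (hx : x ∈ D) {j : ι}
    (hy : y ∈ C j) (hh : 2 * nbrCount G x (C j) = (C j).card) :
    adjM (GMswitch G C D) x y = 1 - adjM G x y := by
  have hne : x ≠ y := fun h => not_mem_cell hP hx j (h ▸ hy)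
  have hf : Flips G C D x y := ⟨j, Or.inl ⟨hx, hy, hh⟩⟩
  have hiff : (GMswitch G C D).Adj x y ↔ ¬ G.Adj x y := by
    rw [GMswitch_adj]
    constructor
    · rintro ⟨-, h'⟩
      rcases h' with ⟨-, hnf⟩ | ⟨-, hna⟩
      · exact absurd hf hnf
      · exact hna
    · intro hna; exact ⟨hne, Or.inr ⟨hf, hna⟩⟩
  simp only [adjM, Matrix.of_apply, hiff]
  by_cases ha : G.Adj x y <;> simp [ha]

lemma QAQ (hGM : IsGMPartition G C D) :
    switchMatrix C D * adjM G * switchMatrix C D = adjM (GMswitch G C D) := by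
  obtain ⟨hP, hE, hH⟩ := hGM
  have hQA_D : ∀ x ∈ D, ∀ w, (switchMatrix C D * adjM G) x w = adjM G x w := by
    intro x hx w
    rw [Matrix.mul_apply]
    exact Q_row_D hP hx _
  have key : ∀ x ∈ D, ∀ y,
      (switchMatrix C D * adjM G * switchMatrix C D) x y
        = adjM (GMswitch G C D) x y := by
    intro x hx y
    rw [Matrix.mul_apply]
    rcases hP.2.2.2.2 y with hy | ⟨j, hy⟩
    · rw [Q_col_D hP hy (fun w => (switchMatrix C D * adjM G) x w), hQA_D x hx y,
        adjM_GMswitch_not (not_flips_DD hP hx hy)]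
    · rw [Q_col_C hP hy (fun w => (switchMatrix C D * adjM G) x w),
        Finset.sum_congr rfl (fun w _ => hQA_D x hx w), hQA_D x hx y, ← nbrCount_cast]
      have hn := cell_card_ne hP j
      have hcard : (C j).card ≠ 0 := Finset.card_ne_zero.mpr (hP.1 j)
      rcases hH x hx j with h0 | hhalf | hfull
      · have hA : adjM G x y = 0 := by
          rw [adjM_eq_zero_iff]
          intro ha
          have hmem : y ∈ (C j).filter (fun z => G.Adj x z) :=
            Finset.mem_filter.2 ⟨hy, ha⟩
          rw [nbrCount, Finset.card_eq_zero] at h0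
          simp [h0] at hmem
        have hnf : ¬ Flips G C D x y := by
          rw [flips_DC hP hx hy]
          omega
        rw [adjM_GMswitch_not hnf, h0, hA]
        norm_num
      · rw [adjM_GMswitch_flip hP hx hy hhalf]
        have h2 : 2 * ((nbrCount G x (C j) : ℕ) : ℚ) = ((C j).card : ℚ) := by
          exact_mod_cast congrArg (Nat.cast : ℕ → ℚ) hhalf
        field_simp
        linarith [h2]
      · have hA : adjM G x y = 1 := by
          rw [adjM_eq_one_iff]
          have hfil : (C j).filter (fun z => G.Adj x z) = C j :=
            Finset.eq_of_subset_of_card_le (Finset.filter_subset _ _) (le_of_eq hfull.symm)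
          have hmem : y ∈ (C j).filter (fun z => G.Adj x z) := hfil.symm ▸ hy
          exact (Finset.mem_filter.mp hmem).2
        have hnf : ¬ Flips G C D x y := by
          rw [flips_DC hP hx hy]
          omega
        rw [adjM_GMswitch_not hnf, hfull, hA, div_mul_cancel₀ _ hn]
        norm_num
  have keyCC : ∀ i j : ι, ∀ x ∈ C i, ∀ y ∈ C j,
      (switchMatrix C D * adjM G * switchMatrix C D) x y
        = adjM (GMswitch G C D) x y := by
    intro i j x hx y hy
    have hni := cell_card_ne hP i
    have hnj := cell_card_ne hP j
    rw [Matrix.mul_apply, Q_col_C hP hy (fun w => (switchMatrix C D * adjM G) x w)]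
    have hQA : ∀ w, (switchMatrix C D * adjM G) x w
        = 2 / ((C i).card : ℚ) * ((nbrCount G w (C i) : ℕ) : ℚ) - adjM G x w := by
      intro w
      rw [Matrix.mul_apply, Q_row_C hP hx (fun z => adjM G z w), ← nbrCount_cast']
    set a : ℚ := ((nbrCount G x (C j) : ℕ) : ℚ) with ha
    set b : ℚ := ((nbrCount G y (C i) : ℕ) : ℚ) with hb
    have hbw : ∀ w ∈ C j, ((nbrCount G w (C i) : ℕ) : ℚ) = b := by
      intro w hw
      rw [hb]
      exact_mod_cast congrArg (Nat.cast : ℕ → ℚ) (hE j i w hw y hy)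
    have hsum1 : ∑ w ∈ C j, (switchMatrix C D * adjM G) x w
        = 2 / ((C i).card : ℚ) * (((C j).card : ℚ) * b) - a := by
      rw [Finset.sum_congr rfl (fun w hw => by rw [hQA w, hbw w hw])]
      rw [Finset.sum_sub_distrib, Finset.sum_const, ← nbrCount_cast, nsmul_eq_mul, ← ha]
      ring
    have hdouble : ((C i).card : ℚ) * a = ((C j).card : ℚ) * b := by
      have h1 : ∑ z ∈ C i, ((nbrCount G z (C j) : ℕ) : ℚ) = ((C i).card : ℚ) * a := by
        rw [Finset.sum_congr rfl
          (fun z hz => (Nat.cast_inj.mpr (hE i j z hz x hx) : ((nbrCount G z (C j) : ℕ) : ℚ) = a)),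
          Finset.sum_const, nsmul_eq_mul]
      have h3 : ∑ w ∈ C j, ((nbrCount G w (C i) : ℕ) : ℚ) = ((C j).card : ℚ) * b := by
        rw [Finset.sum_congr rfl hbw, Finset.sum_const, nsmul_eq_mul]
      have h2 : ∑ z ∈ C i, ((nbrCount G z (C j) : ℕ) : ℚ)
          = ∑ w ∈ C j, ((nbrCount G w (C i) : ℕ) : ℚ) := by
        simp_rw [nbrCount_cast]
        refine Finset.sum_comm.trans ?_
        exact Finset.sum_congr rfl fun w _ => Finset.sum_congr rfl fun z _ => adjM_symm G z w
      rw [← h1, h2, h3]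
    rw [hsum1, hQA y, hbw y hy, adjM_GMswitch_not (not_flips_CC hP hx hy)]
    field_simp
    linear_combination (-2 : ℚ) * hdouble
  have hQt : (switchMatrix C D)ᵀ = switchMatrix C D := by
    ext u v; exact Q_symm hP v u
  have hAt : (adjM G)ᵀ = adjM G := by
    ext u v; exact adjM_symm G v u
  have hMt : (switchMatrix C D * adjM G * switchMatrix C D)ᵀ
      = switchMatrix C D * adjM G * switchMatrix C D := by
    rw [Matrix.transpose_mul, Matrix.transpose_mul, hQt, hAt, ← Matrix.mul_assoc]
  ext x y
  rcases hP.2.2.2.2 x with hx | ⟨i, hx⟩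
  · exact key x hx y
  · rcases hP.2.2.2.2 y with hy | ⟨j, hy⟩
    · have h1 : (switchMatrix C D * adjM G * switchMatrix C D) x y
          = (switchMatrix C D * adjM G * switchMatrix C D) y x := by
        conv_lhs => rw [← hMt]
        rw [Matrix.transpose_apply]
      rw [h1, key y hy x, adjM_symm]
    · exact keyCC i j x hx y hy

end GMswitchLemmas

section Unified
variable {V W : Type*} [Fintype V] [DecidableEq V] [Fintype W] [DecidableEq W]
  {G : SimpleGraph V} {H : SimpleGraph W}

lemma adj_unifiedProd_iff {s : Fin 3 → Fin 3 → ℚ} {p q : V × W} :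
    (unifiedProd G H s).Adj p q
      ↔ p ≠ q ∧ s (relIdx G p.1 q.1) (relIdx H p.2 q.2) = 1 := by
  constructor
  · rintro ⟨hne, i, j, hs1, hi, hj⟩
    rw [relOfIdx_iff] at hi hj
    exact ⟨hne, hi ▸ hj ▸ hs1⟩
  · rintro ⟨hne, h⟩
    exact ⟨hne, _, _, h, relOfIdx_iff.2 rfl, relOfIdx_iff.2 rfl⟩

lemma GMswitch_adj_not {ι : Type*} {C : ι → Finset V} {D : Finset V} {x y : V}
    (h : ¬ Flips G C D x y) : (GMswitch G C D).Adj x y ↔ G.Adj x y := by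
  rw [GMswitch_adj]
  constructor
  · rintro ⟨-, h'⟩
    rcases h' with ⟨ha, -⟩ | ⟨hf, -⟩
    · exact ha
    · exact absurd hf h
  · intro ha
    exact ⟨G.ne_of_adj ha, Or.inl ⟨ha, h⟩⟩

lemma GMswitch_adj_flip {ι : Type*} {C : ι → Finset V} {D : Finset V} {x y : V}
    (hne : x ≠ y) (hf : Flips G C D x y) :
    (GMswitch G C D).Adj x y ↔ ¬ G.Adj x y := by
  rw [GMswitch_adj]
  constructor
  · rintro ⟨-, h'⟩
    rcases h' with ⟨-, hnf⟩ | ⟨-, hna⟩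
    · exact absurd hf hnf
    · exact hna
  · intro hna; exact ⟨hne, Or.inr ⟨hf, hna⟩⟩

lemma stdMats_apply (G : SimpleGraph V) (i : Fin 3) (x y : V) :
    stdMats G i x y = if i = relIdx G x y then 1 else 0 := by
  by_cases h : x = y
  · subst h
    have ha := G.irrefl (v := x)
    fin_cases i <;>
      simp [stdMats, relIdx, adjM, allOnes, Matrix.one_apply, Matrix.sub_apply, ha]
  · by_cases ha : G.Adj x y <;>
      fin_cases i <;>
        simp [stdMats, relIdx, adjM, allOnes, Matrix.one_apply, Matrix.sub_apply, h, ha]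

lemma adjM_unifiedProd (G : SimpleGraph V) (H : SimpleGraph W) (s : Fin 3 → Fin 3 → ℚ)
    (hs : ∀ i j, s i j = 0 ∨ s i j = 1) (hs00 : s 0 0 = 0) :
    adjM (unifiedProd G H s)
      = ∑ i : Fin 3, ∑ j : Fin 3, s i j • (stdMats G i ⊗ₖ stdMats H j) := by
  ext p q
  have hR : (∑ i : Fin 3, ∑ j : Fin 3, s i j • (stdMats G i ⊗ₖ stdMats H j)) p q
      = s (relIdx G p.1 q.1) (relIdx H p.2 q.2) := by
    simp [Matrix.sum_apply, Matrix.smul_apply, Matrix.kroneckerMap_apply,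
      stdMats_apply, smul_eq_mul, mul_ite, ite_mul, mul_one, mul_zero, zero_mul,
      Finset.sum_ite_eq', Finset.mem_univ]
  rw [hR]
  by_cases hpq : p = q
  · subst hpq
    simp [adjM, SimpleGraph.irrefl, relIdx, hs00]
  · rcases hs (relIdx G p.1 q.1) (relIdx H p.2 q.2) with h | h
    · have hna : ¬ (unifiedProd G H s).Adj p q := by
        rw [adj_unifiedProd_iff]
        rintro ⟨-, h1⟩
        rw [h] at h1
        norm_num at h1
      simp [adjM, hna, h]
    · have hadj : (unifiedProd G H s).Adj p q := adj_unifiedProd_iff.2 ⟨hpq, h⟩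
      simp [adjM, hadj, h]

lemma QstdQ {ι : Type*} {C : ι → Finset V} {D : Finset V}
    (hGM : IsGMPartition G C D) (k : Fin 3) :
    switchMatrix C D * stdMats G k * switchMatrix C D = stdMats (GMswitch G C D) k := by
  have hP := hGM.1
  fin_cases k
  · show switchMatrix C D * 1 * switchMatrix C D = 1
    rw [Matrix.mul_one, QQ hP]
  · exact QAQ hGM
  · show switchMatrix C D * (allOnes V - 1 - adjM G) * switchMatrix C D
      = allOnes V - 1 - adjM (GMswitch G C D)
    have e1 : switchMatrix C D * (allOnes V - 1 - adjM G) * switchMatrix C D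
        = switchMatrix C D * allOnes V * switchMatrix C D
          - switchMatrix C D * switchMatrix C D
          - switchMatrix C D * adjM G * switchMatrix C D := by
      noncomm_ring
    rw [e1, QJ hP, JQ hP, QQ hP, QAQ hGM]

lemma conj_unifiedProd {ι : Type*} {C : ι → Finset V} {D : Finset V}
    (hGM : IsGMPartition G C D) (H : SimpleGraph W) (s : Fin 3 → Fin 3 → ℚ)
    (hs : ∀ i j, s i j = 0 ∨ s i j = 1) (hs00 : s 0 0 = 0) :
    (switchMatrix C D ⊗ₖ (1 : Matrix W W ℚ)) * adjM (unifiedProd G H s)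
        * (switchMatrix C D ⊗ₖ (1 : Matrix W W ℚ))
      = adjM (unifiedProd (GMswitch G C D) H s) := by
  rw [adjM_unifiedProd G H s hs hs00, adjM_unifiedProd (GMswitch G C D) H s hs hs00]
  simp only [Matrix.mul_sum, Matrix.sum_mul, Matrix.mul_smul, Matrix.smul_mul]
  refine Finset.sum_congr rfl fun i _ => Finset.sum_congr rfl fun j _ => ?_
  congr 1
  rw [← Matrix.mul_kronecker_mul, ← Matrix.mul_kronecker_mul, QstdQ hGM i,
    Matrix.one_mul, Matrix.mul_one]

lemma switchMatrix_prod {ι : Type*} {C : ι → Finset V} {D : Finset V}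
    (hP : IsPartitionWithCell C D) :
    switchMatrix (fun c : ι × W => C c.1 ×ˢ ({c.2} : Finset W))
        (D ×ˢ (Finset.univ : Finset W))
      = switchMatrix C D ⊗ₖ (1 : Matrix W W ℚ) := by
  have hdis := hP.2.2.1
  have hdis' : Pairwise fun c c' : ι × W =>
      Disjoint (C c.1 ×ˢ ({c.2} : Finset W)) (C c'.1 ×ˢ ({c'.2} : Finset W)) := by
    rintro ⟨i, w0⟩ ⟨j, w1⟩ hne
    rw [Finset.disjoint_left]
    rintro ⟨a, b⟩ hab hab'
    rw [Finset.mem_product, Finset.mem_singleton] at hab hab'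
    exact hne (Prod.ext (cell_eq hdis hab.1 hab'.1) (hab.2.symm.trans hab'.2))
  ext ⟨x, u⟩ ⟨y, w⟩
  rw [Matrix.kroneckerMap_apply]
  by_cases huw : u = w
  · subst huw
    rw [Matrix.one_apply_eq, mul_one]
    by_cases h : ∃ i, x ∈ C i ∧ y ∈ C i
    · obtain ⟨i, hx, hy⟩ := h
      have hx' : (x, u) ∈ C i ×ˢ ({u} : Finset W) :=
        Finset.mem_product.2 ⟨hx, Finset.mem_singleton_self u⟩
      have hy' : (y, u) ∈ C i ×ˢ ({u} : Finset W) :=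
        Finset.mem_product.2 ⟨hy, Finset.mem_singleton_self u⟩
      rw [Q_CC hdis' (i := (i, u)) hx' hy', Q_CC hdis hx hy,
        Finset.card_product, Finset.card_singleton, mul_one]
      congr 1
      by_cases hxy : x = y <;> simp [hxy, Prod.ext_iff]
    · have h' : ¬ ∃ c : ι × W, (x, u) ∈ C c.1 ×ˢ ({c.2} : Finset W)
          ∧ (y, u) ∈ C c.1 ×ˢ ({c.2} : Finset W) := by
        rintro ⟨⟨i, w0⟩, h1, h2⟩
        rw [Finset.mem_product] at h1 h2
        exact h ⟨i, h1.1, h2.1⟩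
      rw [Q_not h', Q_not h]
      have hmem : ∀ z : V, ((z, u) ∈ D ×ˢ (Finset.univ : Finset W)) = (z ∈ D) := by
        intro z
        simp [Finset.mem_product]
      by_cases hD : x ∈ D ∧ y ∈ D
      · rw [if_pos, if_pos hD]
        · by_cases hxy : x = y <;> simp [hxy, Prod.ext_iff]
        · exact ⟨(hmem x) ▸ hD.1, (hmem y) ▸ hD.2⟩
      · rw [if_neg, if_neg hD]
        rintro ⟨h1, h2⟩
        exact hD ⟨(hmem x) ▸ h1, (hmem y) ▸ h2⟩
  · rw [Matrix.one_apply_ne huw, mul_zero]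
    have h' : ¬ ∃ c : ι × W, (x, u) ∈ C c.1 ×ˢ ({c.2} : Finset W)
        ∧ (y, w) ∈ C c.1 ×ˢ ({c.2} : Finset W) := by
      rintro ⟨⟨i, w0⟩, h1, h2⟩
      rw [Finset.mem_product, Finset.mem_singleton] at h1 h2
      exact huw (h1.2.trans h2.2.symm)
    rw [Q_not h']
    have hne : ((x, u) : V × W) ≠ (y, w) := fun hc => huw (congrArg Prod.snd hc)
    simp [hne]

end Unified

section Final
variable {V W : Type*} [Fintype V] [DecidableEq V] [Fintype W] [DecidableEq W]
  {G : SimpleGraph V} {H : SimpleGraph W}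

lemma half_prod_iff {ι : Type*} {C : ι → Finset V} {D : Finset V}
    (hP : IsPartitionWithCell C D) (s : Fin 3 → Fin 3 → ℚ)
    (hs : ∀ i j, s i j = 0 ∨ s i j = 1) {x : V} (hx : x ∈ D) (i : ι) (u w : W) :
    2 * nbrCount (unifiedProd G H s) (x, u) (C i ×ˢ ({w} : Finset W))
        = (C i ×ˢ ({w} : Finset W)).card
      ↔ (2 * nbrCount G x (C i) = (C i).card
          ∧ s 1 (relIdx H u w) ≠ s 2 (relIdx H u w)) := by
  have hcard : (C i).card ≠ 0 := Finset.card_ne_zero.mpr (hP.1 i)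
  set j0 := relIdx H u w with hj0
  have hcnt : nbrCount (unifiedProd G H s) (x, u) (C i ×ˢ ({w} : Finset W))
      = ((C i).filter fun y => if G.Adj x y then s 1 j0 = 1 else s 2 j0 = 1).card := by
    rw [nbrCount, Finset.product_singleton, Finset.filter_map, Finset.card_map]
    congr 1
    apply Finset.filter_congr
    intro y hy
    have hxy : x ≠ y := fun h => not_mem_cell hP hx i (h ▸ hy)
    have hne : ((x, u) : V × W) ≠ (y, w) := fun hc => hxy (congrArg Prod.fst hc)
    show (unifiedProd G H s).Adj (x, u) (y, w) ↔ _
    rw [adj_unifiedProd_iff]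
    have hrg : relIdx G x y = if G.Adj x y then 1 else 2 := by rw [relIdx, if_neg hxy]
    by_cases ha : G.Adj x y <;> simp [hrg, hxy, ha, hne, ← hj0]
  rw [hcnt, Finset.card_product, Finset.card_singleton, mul_one]
  have hle : nbrCount G x (C i) ≤ (C i).card := Finset.card_filter_le _ _
  have hsplit : ((C i).filter fun y => G.Adj x y).card
      + ((C i).filter fun y => ¬ G.Adj x y).card = (C i).card :=
    Finset.card_filter_add_card_filter_not _
  rcases hs 1 j0 with h1 | h1 <;> rcases hs 2 j0 with h2 | h2
  · have hfil : ((C i).filter fun y => if G.Adj x y then s 1 j0 = 1 else s 2 j0 = 1) = ∅ := by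
      rw [Finset.filter_false_of_mem]
      intro y _
      by_cases ha : G.Adj x y <;> simp [ha, h1, h2]
    rw [hfil]
    simp only [Finset.card_empty, h1, h2, ne_eq, not_true_eq_false, and_false, iff_false]
    omega
  · have hfil : ((C i).filter fun y => if G.Adj x y then s 1 j0 = 1 else s 2 j0 = 1)
        = (C i).filter fun y => ¬ G.Adj x y := by
      apply Finset.filter_congr
      intro y _
      by_cases ha : G.Adj x y <;> simp [ha, h1, h2]
    rw [hfil]
    have h12 : s 1 j0 ≠ s 2 j0 := by rw [h1, h2]; norm_num
    simp only [eq_true h12, and_true]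
    simp only [nbrCount] at hle hsplit ⊢
    omega
  · have hfil : ((C i).filter fun y => if G.Adj x y then s 1 j0 = 1 else s 2 j0 = 1)
        = (C i).filter fun y => G.Adj x y := by
      apply Finset.filter_congr
      intro y _
      by_cases ha : G.Adj x y <;> simp [ha, h1, h2]
    rw [hfil]
    have h12 : s 1 j0 ≠ s 2 j0 := by rw [h1, h2]; norm_num
    simp only [eq_true h12, and_true]
    simp only [nbrCount]
  · have hfil : ((C i).filter fun y => if G.Adj x y then s 1 j0 = 1 else s 2 j0 = 1)
        = C i := by
      apply Finset.filter_true_of_mem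
      intro y _
      by_cases ha : G.Adj x y <;> simp [ha, h1, h2]
    rw [hfil]
    simp only [h1, h2, ne_eq, not_true_eq_false, and_false, iff_false]
    omega

lemma flips_prod_iff {ι : Type*} {C : ι → Finset V} {D : Finset V}
    (hP : IsPartitionWithCell C D) (s : Fin 3 → Fin 3 → ℚ)
    (hs : ∀ i j, s i j = 0 ∨ s i j = 1) {x y : V} {u w : W} :
    Flips (unifiedProd G H s) (fun c : ι × W => C c.1 ×ˢ ({c.2} : Finset W))
        (D ×ˢ (Finset.univ : Finset W)) (x, u) (y, w)
      ↔ Flips G C D x y ∧ s 1 (relIdx H u w) ≠ s 2 (relIdx H u w) := by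
  constructor
  · rintro ⟨⟨i, w0⟩, ⟨hxu, hyw, hh⟩ | ⟨hyw, hxu, hh⟩⟩
    · rw [Finset.mem_product] at hxu hyw
      rw [Finset.mem_singleton] at hyw
      obtain ⟨hy, hw0⟩ := hyw
      subst hw0
      have := (half_prod_iff hP s hs hxu.1 i u w).mp hh
      exact ⟨⟨i, Or.inl ⟨hxu.1, hy, this.1⟩⟩, this.2⟩
    · rw [Finset.mem_product] at hxu hyw
      rw [Finset.mem_singleton] at hxu
      obtain ⟨hxc, hw0⟩ := hxu
      subst hw0
      have := (half_prod_iff hP s hs hyw.1 i w u).mp hh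
      rw [relIdx_comm H w u] at this
      exact ⟨⟨i, Or.inr ⟨hyw.1, hxc, this.1⟩⟩, this.2⟩
  · rintro ⟨⟨i, ⟨hxD, hyC, hh⟩ | ⟨hyD, hxC, hh⟩⟩, hsne⟩
    · refine ⟨(i, w), Or.inl ⟨?_, ?_, (half_prod_iff hP s hs hxD i u w).mpr ⟨hh, hsne⟩⟩⟩
      · exact Finset.mem_product.2 ⟨hxD, Finset.mem_univ u⟩
      · exact Finset.mem_product.2 ⟨hyC, Finset.mem_singleton_self w⟩
    · refine ⟨(i, u), Or.inr ⟨?_, ?_, (half_prod_iff hP s hs hyD i w u).mpr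
        ⟨hh, by rwa [relIdx_comm H w u]⟩⟩⟩
      · exact Finset.mem_product.2 ⟨hyD, Finset.mem_univ w⟩
      · exact Finset.mem_product.2 ⟨hxC, Finset.mem_singleton_self u⟩

lemma GMswitch_prod {ι : Type*} {C : ι → Finset V} {D : Finset V}
    (hGM : IsGMPartition G C D) (s : Fin 3 → Fin 3 → ℚ)
    (hs : ∀ i j, s i j = 0 ∨ s i j = 1) :
    GMswitch (unifiedProd G H s) (fun c : ι × W => C c.1 ×ˢ ({c.2} : Finset W))
        (D ×ˢ (Finset.univ : Finset W))
      = unifiedProd (GMswitch G C D) H s := by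
  obtain ⟨hP, hE, hH⟩ := hGM
  ext ⟨x, u⟩ ⟨y, w⟩
  rw [GMswitch_adj]
  conv_rhs => rw [adj_unifiedProd_iff]
  apply and_congr_right
  intro hne
  rw [flips_prod_iff hP s hs]
  set j0 := relIdx H u w with hj0
  have hA : (unifiedProd G H s).Adj (x, u) (y, w) ↔ s (relIdx G x y) j0 = 1 := by
    rw [adj_unifiedProd_iff]
    simp [hne, ← hj0]
  by_cases hf : Flips G C D x y
  · have hxy : x ≠ y := by
      rcases hf with ⟨i, ⟨hxD, hyC, -⟩ | ⟨hyD, hxC, -⟩⟩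
      · exact fun h => not_mem_cell hP hxD i (h ▸ hyC)
      · exact fun h => not_mem_cell hP hyD i (h ▸ hxC)
    have hsw := GMswitch_adj_flip (C := C) (D := D) hxy hf
    have hr : relIdx G x y = if G.Adj x y then 1 else 2 := by
      rw [relIdx, if_neg hxy]
    have hr' : relIdx (GMswitch G C D) x y = if G.Adj x y then 2 else 1 := by
      rw [relIdx, if_neg hxy]
      by_cases ha : G.Adj x y
      · rw [if_pos ha, if_neg (fun hc => (hsw.mp hc) ha)]
      · rw [if_neg ha, if_pos (hsw.mpr ha)]
    rw [hr] at hA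
    by_cases ha : G.Adj x y <;>
      rcases hs 1 j0 with h1 | h1 <;> rcases hs 2 j0 with h2 | h2 <;>
        simp [Xor', hA, hf, hr', ha, h1, h2]
  · have hsw := GMswitch_adj_not (C := C) (D := D) hf
    have hr' : relIdx (GMswitch G C D) x y = relIdx G x y := by
      unfold relIdx
      by_cases hxy : x = y
      · simp [hxy]
      · simp [hxy, hsw]
    simp [Xor', Xor, hA, hf, hr']

end Final



/-- the switching matrix of the induced partition `Π` is `Q ⊗ I`;
conjugating `A(Γ ⋆ Δ)` by `Q ⊗ I` gives `A((sw_π Γ) ⋆ Δ)`; consequently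
`(sw_π Γ) ⋆ Δ` is isomorphic to `sw_Π (Γ ⋆ Δ)`. -/
theorem switch_unifiedProd_compat {V W : Type*} [Fintype V] [DecidableEq V]
    [Fintype W] [DecidableEq W] (G : SimpleGraph V) (H : SimpleGraph W)
    (s : Fin 3 → Fin 3 → ℚ) (hs : ∀ i j, s i j = 0 ∨ s i j = 1) (hs00 : s 0 0 = 0)
    {t : ℕ} (C : Fin t → Finset V) (D : Finset V)
    (hGM : IsGMPartition G C D) :
    switchMatrix (fun c : Fin t × W => C c.1 ×ˢ ({c.2} : Finset W))
        (D ×ˢ (Finset.univ : Finset W))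
      = switchMatrix C D ⊗ₖ (1 : Matrix W W ℚ)
    ∧ (switchMatrix C D ⊗ₖ (1 : Matrix W W ℚ)) * adjM (unifiedProd G H s)
          * (switchMatrix C D ⊗ₖ (1 : Matrix W W ℚ))
        = adjM (unifiedProd (GMswitch G C D) H s)
    ∧ Nonempty (GMswitch (unifiedProd G H s)
          (fun c : Fin t × W => C c.1 ×ˢ ({c.2} : Finset W))
          (D ×ˢ (Finset.univ : Finset W))
        ≃g unifiedProd (GMswitch G C D) H s) := by
  refine ⟨switchMatrix_prod hGM.1, conj_unifiedProd hGM H s hs hs00, ?_⟩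
  rw [GMswitch_prod hGM s hs]
  exact ⟨SimpleGraph.Iso.refl⟩
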